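/- Let X_1, …, X_N be independent identically distributed random variables on a probability space, each taking values in the interval [0,1] almost surely, with common mean p satisfying 0 < p ≤ 1, and set X̄ = (1/N) ∑_{i=1}^N X_i. Then: (i) √p − (1−p)/(2N√p) ≤ E[√X̄] ≤ √p; and (ii) Var(√X̄) ≤ (1−p)/N + (1−p)²/(4N²p). -/

import Mathlib

open MeasureTheory ProbabilityTheory

lemma sqrt_lower_aux {p y : ℝ} (hp : 0 < p) (hy : 0 ≤ y) :
    Real.sqrt p + (y - p) / (2 * Real.sqrt p) - (y - p) ^ 2 / (2 * p * Real.sqrt p)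
      ≤ Real.sqrt y := by
  have hs : 0 < Real.sqrt p := Real.sqrt_pos.2 hp
  have ht : 0 ≤ Real.sqrt y := Real.sqrt_nonneg y
  have hps : Real.sqrt p ^ 2 = p := Real.sq_sqrt hp.le
  have hys : Real.sqrt y ^ 2 = y := Real.sq_sqrt hy
  set s := Real.sqrt p
  set t := Real.sqrt y
  have h2ps : (0:ℝ) < 2 * p * s := by positivity
  have hEq : s + (y - p) / (2 * s) - (y - p) ^ 2 / (2 * p * s)
      = (2 * p * s * s + p * (y - p) - (y - p) ^ 2) / (2 * p * s) := by
    field_simp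
  rw [hEq, div_le_iff₀ h2ps]
  nlinarith [mul_nonneg (mul_nonneg ht (sq_nonneg (t - s))) (by positivity : (0:ℝ) ≤ t + 2 * s),
    sq_nonneg (t - s), sq_nonneg (t + s)]

lemma sqrt_upper_aux {p y : ℝ} (hp : 0 < p) (hy : 0 ≤ y) :
    Real.sqrt y ≤ Real.sqrt p + (y - p) / (2 * Real.sqrt p) := by
  have hs : 0 < Real.sqrt p := Real.sqrt_pos.2 hp
  have hps : Real.sqrt p ^ 2 = p := Real.sq_sqrt hp.le
  have hys : Real.sqrt y ^ 2 = y := Real.sq_sqrt hy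
  rw [← sub_le_iff_le_add', le_div_iff₀ (by positivity)]
  nlinarith [sq_nonneg (Real.sqrt y - Real.sqrt p)]

theorem sqrt_sample_mean_expectation_and_variance_bounds
    {Ω : Type*} [MeasurableSpace Ω] (μ : Measure Ω) [IsProbabilityMeasure μ]
    {N : ℕ} (hN : 1 ≤ N) (X : Fin N → Ω → ℝ)
    (hmeas : ∀ i, Measurable (X i))
    (hindep : iIndepFun X μ)
    (hident : ∀ i j, IdentDistrib (X i) (X j) μ μ)
    (hrange : ∀ i, ∀ᵐ ω ∂μ, X i ω ∈ Set.Icc (0 : ℝ) 1)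
    {p : ℝ} (hp0 : 0 < p) (hp1 : p ≤ 1)
    (hmean : ∀ i, ∫ ω, X i ω ∂μ = p) :
    (Real.sqrt p - (1 - p) / (2 * N * Real.sqrt p) ≤
        ∫ ω, Real.sqrt ((1 / N) * ∑ i, X i ω) ∂μ) ∧
    (∫ ω, Real.sqrt ((1 / N) * ∑ i, X i ω) ∂μ ≤ Real.sqrt p) ∧
    ((∫ ω, (Real.sqrt ((1 / N) * ∑ i, X i ω)) ^ 2 ∂μ) -
        (∫ ω, Real.sqrt ((1 / N) * ∑ i, X i ω) ∂μ) ^ 2 ≤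
      (1 - p) / N + (1 - p) ^ 2 / (4 * N ^ 2 * p)) := by
  classical
  have hNR : (0:ℝ) < N := by exact_mod_cast Nat.lt_of_lt_of_le Nat.zero_lt_one hN
  set Y : Ω → ℝ := fun ω => (1 / N) * ∑ i, X i ω with hYdef
  have hYmeas : Measurable Y := by
    apply Measurable.const_mul
    exact Finset.measurable_sum _ fun i _ => hmeas i
  have hrange' : ∀ᵐ ω ∂μ, ∀ i, X i ω ∈ Set.Icc (0:ℝ) 1 := ae_all_iff.2 hrange
  have hYrange : ∀ᵐ ω ∂μ, Y ω ∈ Set.Icc (0:ℝ) 1 := by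
    filter_upwards [hrange'] with ω hω
    have h1 : (0:ℝ) ≤ ∑ i, X i ω := Finset.sum_nonneg fun i _ => (hω i).1
    have h2 : ∑ i, X i ω ≤ N := by
      calc ∑ i, X i ω ≤ ∑ _i : Fin N, (1:ℝ) := Finset.sum_le_sum fun i _ => (hω i).2
        _ = N := by simp
    have hYeq : Y ω = (∑ i, X i ω) / N := by rw [hYdef]; ring
    constructor
    · rw [hYeq]; positivity
    · rw [hYeq, div_le_one hNR]; exact h2
  have hXmem : ∀ i, MemLp (X i) 2 μ := fun i =>
    MemLp.of_bound (hmeas i).aestronglyMeasurable 1 (by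
      filter_upwards [hrange i] with ω hω
      rw [Real.norm_eq_abs, abs_le]
      exact ⟨by linarith [hω.1], hω.2⟩)
  have hYmem : MemLp Y 2 μ := MemLp.of_bound hYmeas.aestronglyMeasurable 1 (by
    filter_upwards [hYrange] with ω hω
    rw [Real.norm_eq_abs, abs_le]
    exact ⟨by linarith [hω.1], hω.2⟩)
  have hXint : ∀ i, Integrable (X i) μ := fun i => (hXmem i).integrable one_le_two
  have hYint : Integrable Y μ := hYmem.integrable one_le_two
  have hEY : ∫ ω, Y ω ∂μ = p := by
    simp only [hYdef]
    rw [integral_const_mul, integral_finset_sum _ fun i _ => hXint i]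
    simp only [hmean, Finset.sum_const, Finset.card_univ, Fintype.card_fin, nsmul_eq_mul]
    field_simp
  -- variance bounds
  have hVarXi : ∀ i, variance (X i) μ ≤ p * (1 - p) := by
    intro i
    rw [variance_eq_sub (hXmem i)]
    have hsq : ∫ ω, (X i ω) ^ 2 ∂μ ≤ ∫ ω, X i ω ∂μ := by
      apply integral_mono_ae (hXmem i).integrable_sq (hXint i)
      filter_upwards [hrange i] with ω hω
      nlinarith [hω.1, hω.2]
    have h1 : μ[X i ^ 2] = ∫ ω, (X i ω) ^ 2 ∂μ := rfl
    have h2 : μ[X i] = p := hmean i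
    rw [h1, h2]
    nlinarith [hmean i]
  have hpair : Set.Pairwise ↑(Finset.univ : Finset (Fin N))
      fun i j => IndepFun (X i) (X j) μ := fun i _ j _ hij => hindep.indepFun hij
  have hVarS : variance (∑ i, X i) μ = ∑ i, variance (X i) μ :=
    IndepFun.variance_sum (fun i _ => hXmem i) hpair
  have hVarY : variance Y μ ≤ p * (1 - p) / N := by
    have hYeq : Y = fun ω => (1 / N : ℝ) * (∑ i, X i) ω := by
      funext ω; rw [hYdef]; simp
    rw [hYeq, variance_const_mul, hVarS]
    have hsum : ∑ i, variance (X i) μ ≤ N * (p * (1 - p)) := by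
      calc ∑ i, variance (X i) μ ≤ ∑ _i : Fin N, p * (1 - p) :=
            Finset.sum_le_sum fun i _ => hVarXi i
        _ = N * (p * (1 - p)) := by simp [mul_comm]
    calc (1 / N : ℝ) ^ 2 * ∑ i, variance (X i) μ
        ≤ (1 / N : ℝ) ^ 2 * (N * (p * (1 - p))) := by
          exact mul_le_mul_of_nonneg_left hsum (by positivity)
      _ = p * (1 - p) / N := by field_simp
  have hVarY_int : ∫ ω, (Y ω - p) ^ 2 ∂μ = variance Y μ := by
    rw [variance_eq_integral hYmeas.aemeasurable]
    have h2 : μ[Y] = p := hEY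
    rw [h2]
  have hVint : Integrable (fun ω => (Y ω - p) ^ 2) μ :=
    (hYmem.sub (memLp_const p)).integrable_sq
  have hE0 : ∫ ω, (Y ω - p) ∂μ = 0 := by
    rw [integral_sub hYint (integrable_const p), hEY, integral_const]
    simp
  have hsqrt_int : Integrable (fun ω => Real.sqrt (Y ω)) μ := by
    refine (MemLp.of_bound ((Real.continuous_sqrt.measurable.comp hYmeas).aestronglyMeasurable)
      1 ?_).integrable le_rfl
    filter_upwards [hYrange] with ω hω
    show ‖Real.sqrt (Y ω)‖ ≤ 1
    rw [Real.norm_eq_abs, abs_of_nonneg (Real.sqrt_nonneg _)]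
    calc Real.sqrt (Y ω) ≤ Real.sqrt 1 := Real.sqrt_le_sqrt hω.2
      _ = 1 := Real.sqrt_one
  have hint1 : Integrable (fun ω => Y ω - p) μ := hYint.sub (integrable_const p)
  have hint2 : Integrable (fun ω => (Y ω - p) / (2 * Real.sqrt p)) μ := hint1.div_const _
  have hint3 : Integrable (fun ω => (Y ω - p) ^ 2 / (2 * p * Real.sqrt p)) μ := hVint.div_const _
  have hint4 : Integrable (fun ω => Real.sqrt p + (Y ω - p) / (2 * Real.sqrt p)) μ :=
    (integrable_const _).add hint2
  have hs : 0 < Real.sqrt p := Real.sqrt_pos.2 hp0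
  have hps : Real.sqrt p ^ 2 = p := Real.sq_sqrt hp0.le
  -- lower bound
  have hlow : Real.sqrt p - (1 - p) / (2 * N * Real.sqrt p) ≤ ∫ ω, Real.sqrt (Y ω) ∂μ := by
    have hintlow : Integrable (fun ω => Real.sqrt p + (Y ω - p) / (2 * Real.sqrt p)
        - (Y ω - p) ^ 2 / (2 * p * Real.sqrt p)) μ := by
      exact hint4.sub hint3
    have hmono : ∫ ω, (Real.sqrt p + (Y ω - p) / (2 * Real.sqrt p)
        - (Y ω - p) ^ 2 / (2 * p * Real.sqrt p)) ∂μ ≤ ∫ ω, Real.sqrt (Y ω) ∂μ := by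
      apply integral_mono_ae hintlow hsqrt_int
      filter_upwards [hYrange] with ω hω
      exact sqrt_lower_aux hp0 hω.1
    have hcalc : ∫ ω, (Real.sqrt p + (Y ω - p) / (2 * Real.sqrt p)
        - (Y ω - p) ^ 2 / (2 * p * Real.sqrt p)) ∂μ
        = Real.sqrt p + (∫ ω, (Y ω - p) ∂μ) / (2 * Real.sqrt p)
          - (∫ ω, (Y ω - p) ^ 2 ∂μ) / (2 * p * Real.sqrt p) := by
      rw [integral_sub hint4 hint3, integral_add (integrable_const _) hint2,
        integral_const, integral_div, integral_div]
      simp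
    have hVle : ∫ ω, (Y ω - p) ^ 2 ∂μ ≤ p * (1 - p) / N := by
      rw [hVarY_int]; exact hVarY
    have hfin : (p * (1 - p) / N) / (2 * p * Real.sqrt p) = (1 - p) / (2 * N * Real.sqrt p) := by
      field_simp
    have hdiv : (∫ ω, (Y ω - p) ^ 2 ∂μ) / (2 * p * Real.sqrt p)
        ≤ (1 - p) / (2 * N * Real.sqrt p) := by
      rw [← hfin]
      gcongr
    rw [hcalc, hE0] at hmono
    simp only [zero_div, add_zero] at hmono
    linarith
  -- upper bound
  have hup : ∫ ω, Real.sqrt (Y ω) ∂μ ≤ Real.sqrt p := by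
    have hintup := hint4
    have hmono : ∫ ω, Real.sqrt (Y ω) ∂μ
        ≤ ∫ ω, (Real.sqrt p + (Y ω - p) / (2 * Real.sqrt p)) ∂μ := by
      apply integral_mono_ae hsqrt_int hintup
      filter_upwards [hYrange] with ω hω
      exact sqrt_upper_aux hp0 hω.1
    rw [integral_add (integrable_const _) hint2,
      integral_const, integral_div, hE0] at hmono
    simpa using hmono
  -- second moment
  have hsq_eq : ∫ ω, (Real.sqrt (Y ω)) ^ 2 ∂μ = p := by
    rw [← hEY]
    apply integral_congr_ae
    filter_upwards [hYrange] with ω hω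
    exact Real.sq_sqrt hω.1
  have hm_nonneg : (0:ℝ) ≤ ∫ ω, Real.sqrt (Y ω) ∂μ :=
    integral_nonneg fun ω => Real.sqrt_nonneg _
  have hvar : (∫ ω, (Real.sqrt (Y ω)) ^ 2 ∂μ) - (∫ ω, Real.sqrt (Y ω) ∂μ) ^ 2
      ≤ (1 - p) / N + (1 - p) ^ 2 / (4 * N ^ 2 * p) := by
    rw [hsq_eq]
    set m := ∫ ω, Real.sqrt (Y ω) ∂μ
    have hc2 : ((1 - p) / (2 * N * Real.sqrt p)) ^ 2 = (1 - p) ^ 2 / (4 * N ^ 2 * p) := by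
      rw [div_pow]
      congr 1
      rw [mul_pow, mul_pow, hps]
      ring
    have hc2nn : (0:ℝ) ≤ (1 - p) ^ 2 / (4 * N ^ 2 * p) := by positivity
    rcases le_or_gt 0 (Real.sqrt p - (1 - p) / (2 * N * Real.sqrt p)) with hL | hL
    · have hL2 : (Real.sqrt p - (1 - p) / (2 * N * Real.sqrt p)) ^ 2 ≤ m ^ 2 :=
        pow_le_pow_left₀ hL hlow 2
      have h2sc : 2 * Real.sqrt p * ((1 - p) / (2 * N * Real.sqrt p)) = (1 - p) / N := by
        field_simp
      nlinarith [hL2, hc2, hps, hc2nn]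
    · have hsc : Real.sqrt p < (1 - p) / (2 * N * Real.sqrt p) := by linarith
      have : p < (1 - p) ^ 2 / (4 * N ^ 2 * p) := by
        have hlt : Real.sqrt p ^ 2 < ((1 - p) / (2 * N * Real.sqrt p)) ^ 2 :=
          pow_lt_pow_left₀ hsc hs.le two_ne_zero
        rwa [hps, hc2] at hlt
      have hpN : (0:ℝ) ≤ (1 - p) / N := by
        apply div_nonneg (by linarith) hNR.le
      nlinarith [sq_nonneg m]
  -- assemble
  simp only [hYdef] at hlow hup hvar
  exact ⟨hlow, hup, hvar⟩
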